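/- There exists a unital partial action α of the group ℤ on the ring R = K e₁ ⊕ K e₂ (K a field, e₁, e₂ central orthogonal idempotents) such that the partial skew group ring R*_α ℤ is right artinian, ℤ is infinite, and α is not of finite type. Concretely: D₀ = R, D₋₁ = K e₁, D₁ = K e₂, D_i = 0 for |i| ≥ 2, α₁(e₁) = e₂, α₋₁(e₂) = e₁. -/

import Mathlib

set_option linter.unreachableTactic false
set_option linter.unusedTactic false
set_option linter.unnecessarySeqFocus false



/-- A unital (untwisted) partial action of a group `G` on a unital ring `R`:
the domain `D g` is the ideal generated by the central idempotent `e g`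
(`D g = {x | e g * x = x}`), and `act g` is the ring isomorphism
`α_g : D g⁻¹ → D g` (values outside `D g⁻¹` are irrelevant). -/
structure PartialAction (G : Type) [Group G] (R : Type) [Ring R] where
  e : G → R
  idem : ∀ g, e g * e g = e g
  central : ∀ g r, e g * r = r * e g
  e_one : e 1 = 1
  act : G → R → R
  act_mem : ∀ g x, e g⁻¹ * x = x → e g * act g x = act g x
  act_add : ∀ g x y, e g⁻¹ * x = x → e g⁻¹ * y = y →
    act g (x + y) = act g x + act g y
  act_mul : ∀ g x y, e g⁻¹ * x = x → e g⁻¹ * y = y →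
    act g (x * y) = act g x * act g y
  act_one : ∀ x, act 1 x = x
  inv_act : ∀ g x, e g⁻¹ * x = x → act g⁻¹ (act g x) = x
  -- α_g(D_{g⁻¹} ∩ D_h) = D_g ∩ D_{gh}
  act_range : ∀ g h x, e g⁻¹ * x = x → e h * x = x → e (g * h) * act g x = act g x
  act_range' : ∀ g h y, e g * y = y → e (g * h) * y = y →
    ∃ x, e g⁻¹ * x = x ∧ e h * x = x ∧ act g x = y
  -- α_g ∘ α_h = α_{gh} on α_{h⁻¹}(D_h ∩ D_{g⁻¹})
  comp : ∀ g h a, e h⁻¹ * a = a → e (h⁻¹ * g⁻¹) * a = a →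
    act g (act h a) = act (g * h) a

/-- A realization of the partial skew group ring `R *_α G`:  a ring `A` with
maps `δ g : D g → A` such that `A = ⊕_{g ∈ G} D g δ_g` with multiplication
`(a δ_g)(b δ_h) = α_g(α_{g⁻¹}(a) b) δ_{gh}`. -/
structure IsPartialSkewGroupRing {G R : Type} [Group G] [Ring R]
    (pa : PartialAction G R) (A : Type) [Ring A] (δ : G → R → A) : Prop where
  proj : ∀ g a, δ g a = δ g (pa.e g * a)
  add : ∀ g a b, δ g (a + b) = δ g a + δ g b
  mul : ∀ g h a b, pa.e g * a = a → pa.e h * b = b →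
    δ g a * δ h b = δ (g * h) (pa.act g (pa.act g⁻¹ a * b))
  one : δ 1 1 = 1
  indep : ∀ (s : Finset G) (a : G → R), (∀ g, pa.e g * a g = a g) →
    (∑ g ∈ s, δ g (a g)) = 0 → ∀ g ∈ s, a g = 0
  span : ∀ x : A, ∃ (s : Finset G) (a : G → R),
    (∀ g, pa.e g * a g = a g) ∧ x = ∑ g ∈ s, δ g (a g)

/-- A partial action is of finite type if there are `g₁, …, gₙ ∈ G` with
`D_{g g₁} + ⋯ + D_{g gₙ} = R` for every `g ∈ G`. -/
def PartialAction.FiniteType {G R : Type} [Group G] [Ring R]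
    (pa : PartialAction G R) : Prop :=
  ∃ s : Finset G, ∀ g : G, ∃ a : G → R,
    (∀ i, pa.e (g * i) * a i = a i) ∧ ∑ i ∈ s, a i = 1
/-- A ring is semilocal if it is semisimple modulo its Jacobson radical. -/
def IsSemilocalRing (A : Type) [Ring A] : Prop :=
  IsSemisimpleRing (TwoSidedIdeal.jacobson (⊥ : TwoSidedIdeal A)).ringCon.Quotient

/-- A ring is semiprimary if it is semilocal and its Jacobson radical is nilpotent. -/
def IsSemiprimaryRing' (A : Type) [Ring A] : Prop :=
  IsSemilocalRing A ∧ ∃ n : ℕ, 0 < n ∧ ∀ f : Fin n → A,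
    (∀ i, f i ∈ TwoSidedIdeal.jacobson (⊥ : TwoSidedIdeal A)) →
      (List.ofFn f).prod = 0

/-- A ring is right artinian iff its opposite ring is (left) artinian. -/
def IsRightArtinianRing (A : Type) [Ring A] : Prop := IsArtinianRing Aᵐᵒᵖ

/-- A ring is right noetherian iff its opposite ring is (left) noetherian. -/
def IsRightNoetherianRing (A : Type) [Ring A] : Prop := IsNoetherianRing Aᵐᵒᵖ


namespace S7


set_option linter.unreachableTactic false
set_option linter.unusedTactic false

variable {K : Type} [Field K]

def E (K : Type) [Field K] (n : ℤ) : K × K :=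
  if n = 0 then 1 else if n = 1 then (0,1) else if n = -1 then (1,0) else 0

lemma E_mem (n : ℤ) (x : K × K) :
    E K n * x = x ↔ (n = 0 ∨ (n = 1 ∧ x.1 = 0) ∨ (n = -1 ∧ x.2 = 0) ∨ x = 0) := by
  rcases x with ⟨a, b⟩
  by_cases h0 : n = 0 <;> by_cases h1 : n = 1 <;> by_cases h2 : n = -1 <;>
    simp [E, h0, h1, h2, Prod.ext_iff, eq_comm] <;> first | omega | tauto

lemma E_mem_neg (n : ℤ) (x : K × K) :
    E K (-n) * x = x ↔ (n = 0 ∨ (n = -1 ∧ x.1 = 0) ∨ (n = 1 ∧ x.2 = 0) ∨ x = 0) := by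
  rw [E_mem, neg_eq_zero, show (-n = 1) ↔ n = -1 by omega,
    show (-n = -1) ↔ n = 1 by omega]

def Act (n : ℤ) (x : K × K) : K × K := if n = 0 then x else (x.2, x.1)

lemma lem_act_mem (n : ℤ) (x : K × K) (hx : E K (-n) * x = x) :
    E K n * Act n x = Act n x := by
  rw [E_mem_neg] at hx
  rw [E_mem]
  unfold Act
  rcases hx with h | ⟨h, hx⟩ | ⟨h, hx⟩ | hx <;>
    simp_all [Prod.ext_iff] <;> first | omega | tauto | (split_ifs <;> simp_all <;> omega)

lemma lem_act_range (n m : ℤ) (x : K × K) (hg : E K (-n) * x = x)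
    (hx : E K m * x = x) : E K (n + m) * Act n x = Act n x := by
  rw [E_mem_neg] at hg
  rw [E_mem] at hx
  rw [E_mem]
  unfold Act
  rcases hg with h1 | ⟨h1, hg⟩ | ⟨h1, hg⟩ | hg <;>
  rcases hx with h2 | ⟨h2, hx⟩ | ⟨h2, hx⟩ | hx <;>
    simp_all [Prod.ext_iff] <;> first | omega | tauto | (split_ifs <;> simp_all <;> omega)

lemma lem_act_range1 (n : ℤ) (y : K × K) (hg : E K n * y = y) :
    E K (-n) * Act n y = Act n y := by
  rw [E_mem] at hg
  rw [E_mem_neg]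
  unfold Act
  rcases hg with h1 | ⟨h1, hg⟩ | ⟨h1, hg⟩ | hg <;>
    simp_all [Prod.ext_iff] <;> first | omega | tauto | (split_ifs <;> simp_all <;> omega)

lemma lem_act_range2 (n m : ℤ) (y : K × K) (hg : E K n * y = y)
    (hy : E K (n + m) * y = y) : E K m * Act n y = Act n y := by
  rw [E_mem] at hg hy
  rw [E_mem]
  unfold Act
  rcases hg with h1 | ⟨h1, hg⟩ | ⟨h1, hg⟩ | hg <;>
  rcases hy with h2 | ⟨h2, hy⟩ | ⟨h2, hy⟩ | hy <;>
    simp_all [Prod.ext_iff] <;> first | omega | tauto | (split_ifs <;> simp_all <;> omega)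

lemma lem_comp (n m : ℤ) (a : K × K) (hh : E K (-m) * a = a)
    (ha : E K (-m + -n) * a = a) : Act n (Act m a) = Act (n + m) a := by
  rw [E_mem_neg] at hh
  rw [show (-m + -n : ℤ) = -(m + n) by ring, E_mem_neg] at ha
  unfold Act
  rcases eq_or_ne n 0 with h3 | h3
  · simp [h3]
  rcases eq_or_ne m 0 with h4 | h4
  · simp [h4, h3]
  rcases eq_or_ne (n + m) 0 with h5 | h5
  · simp [h3, h4, h5]
  · have hz : a = 0 := by
      rcases hh with h1 | ⟨h1, hh⟩ | ⟨h1, hh⟩ | hh <;>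
      rcases ha with h2 | ⟨h2, ha⟩ | ⟨h2, ha⟩ | ha <;>
        first | omega | assumption | exact Prod.ext_iff.mpr ⟨hh, ha⟩ |
          exact Prod.ext_iff.mpr ⟨ha, hh⟩
    simp [h3, h4, h5, hz]

def pa (K : Type) [Field K] : PartialAction (Multiplicative ℤ) (K × K) where
  e g := E K g.toAdd
  idem g := by by_cases h0 : g.toAdd = 0 <;> by_cases h1 : g.toAdd = 1 <;>
    by_cases h2 : g.toAdd = -1 <;> simp [E, h0, h1, h2, Prod.ext_iff]
  central g r := mul_comm _ _
  e_one := by simp [E]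
  act g x := Act g.toAdd x
  act_mem g x hx := by
    rw [toAdd_inv] at hx; exact lem_act_mem _ _ hx
  act_add g x y _ _ := by unfold Act; split <;> simp [Prod.ext_iff]
  act_mul g x y _ _ := by unfold Act; split <;> simp [Prod.ext_iff]
  act_one x := by simp [Act]
  inv_act g x hx := by
    unfold Act
    rcases eq_or_ne g.toAdd 0 with h | h <;>
      simp [h, toAdd_inv, neg_eq_zero]
  act_range g h x hg hx := by
    rw [toAdd_inv] at hg; rw [toAdd_mul]
    exact lem_act_range _ _ _ hg hx
  act_range' g h y hg hy := by
    rw [toAdd_mul] at hy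
    refine ⟨Act g.toAdd y, ?_, ?_, ?_⟩
    · rw [toAdd_inv]; exact lem_act_range1 _ _ hg
    · exact lem_act_range2 _ _ _ hg hy
    · unfold Act
      rcases eq_or_ne g.toAdd 0 with h1 | h1 <;> simp [h1]
  comp g h a hh ha := by
    rw [toAdd_inv] at hh
    rw [toAdd_mul, toAdd_inv, toAdd_inv] at ha
    rw [toAdd_mul]
    exact lem_comp _ _ _ hh ha


variable (pa : PartialAction (Multiplicative ℤ) (K × K))
  (hpe : ∀ g, pa.e g = E K g.toAdd)
  (hpa : ∀ g x, pa.act g x = Act g.toAdd x)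

lemma act_smul (n : ℤ) (k : K) (y : K × K) :
    Act n ((k,k) * y) = (k,k) * Act n y := by
  unfold Act; split <;> simp [Prod.ext_iff]

include hpe hpa in
lemma artinian (A : Type) [Ring A] (δ : Multiplicative ℤ → K × K → A)
    (hA : IsPartialSkewGroupRing pa A δ) : IsArtinianRing Aᵐᵒᵖ := by
  have e_one' : pa.e 1 = 1 := pa.e_one
  have act_one' : ∀ x, pa.act 1 x = x := pa.act_one
  have δ0 : ∀ g, δ g 0 = 0 := by
    intro g
    have h := hA.add g 0 0
    rw [add_zero] at h
    exact (left_eq_add.mp h)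
  have hψL : ∀ (k : K) g a, pa.e g * a = a →
      δ 1 (k,k) * δ g a = δ g ((k,k) * a) := by
    intro k g a ha
    have h := hA.mul 1 g (k,k) a (by rw [e_one', one_mul]) ha
    rw [one_mul, inv_one, act_one', act_one'] at h
    exact h
  have act_actinv : ∀ g a, pa.e g * a = a → pa.act g (pa.act g⁻¹ a) = a := by
    intro g a ha
    have h := pa.inv_act g⁻¹ a (by rwa [inv_inv])
    rwa [inv_inv] at h
  have hψR : ∀ (k : K) g a, pa.e g * a = a →
      δ g a * δ 1 (k,k) = δ g ((k,k) * a) := by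
    intro k g a ha
    have h := hA.mul g 1 a (k,k) ha (by rw [e_one', one_mul])
    rw [mul_one] at h
    have key : pa.act g (pa.act g⁻¹ a * (k,k)) = (k,k) * a := by
      rw [mul_comm, hpa g, act_smul, ← hpa g, act_actinv g a ha]
    rw [h, key]
  have hcentral : ∀ (k : K) (x : A), δ 1 (k,k) * x = x * δ 1 (k,k) := by
    intro k x
    obtain ⟨s, a, haE, rfl⟩ := hA.span x
    rw [Finset.mul_sum, Finset.sum_mul]
    exact Finset.sum_congr rfl fun g _ => by
      rw [hψL k g (a g) (haE g), hψR k g (a g) (haE g)]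
  let ψ : K →+* A :=
    { toFun := fun k => δ 1 (k,k)
      map_one' := hA.one
      map_mul' := fun k l => by
        have h := hψL k 1 (l,l) (by rw [e_one', one_mul])
        rw [show ((k:K),(k:K)) * (l,l) = (k*l, k*l) from rfl] at h
        exact h.symm
      map_zero' := δ0 1
      map_add' := fun k l => by
        have h := hA.add 1 (k,k) (l,l)
        rw [show ((k:K),(k:K)) + (l,l) = (k+l, k+l) from rfl] at h
        exact h }
  letI alg : Algebra K A := RingHom.toAlgebra' ψ hcentral
  have smul_def : ∀ (k : K) (x : A), k • x = δ 1 (k,k) * x := fun k x => rfl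
  have hsmulδ : ∀ (k : K) g b, pa.e g * b = b →
      δ g ((k,k) * b) = k • δ g b := by
    intro k g b hb
    rw [smul_def, hψL k g b hb]
  -- spanning set
  set v0a : A := δ 1 (1,0) with hv0a
  set v0b : A := δ 1 (0,1) with hv0b
  set v1 : A := δ (Multiplicative.ofAdd 1) (0,1) with hv1
  set v2 : A := δ (Multiplicative.ofAdd (-1)) (1,0) with hv2
  have hspan : Submodule.span K {v0a, v0b, v1, v2} = ⊤ := by
    rw [Submodule.eq_top_iff']
    intro x
    obtain ⟨s, a, haE, rfl⟩ := hA.span x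
    refine Submodule.sum_mem _ fun g _ => ?_
    have hEg := haE g
    rw [hpe g, E_mem] at hEg
    have hofAdd : g = Multiplicative.ofAdd g.toAdd := rfl
    have m0a : v0a ∈ ({v0a, v0b, v1, v2} : Set A) := Set.mem_insert _ _
    have m0b : v0b ∈ ({v0a, v0b, v1, v2} : Set A) :=
      Set.mem_insert_of_mem _ (Set.mem_insert _ _)
    have m1 : v1 ∈ ({v0a, v0b, v1, v2} : Set A) :=
      Set.mem_insert_of_mem _ (Set.mem_insert_of_mem _ (Set.mem_insert _ _))
    have m2 : v2 ∈ ({v0a, v0b, v1, v2} : Set A) :=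
      Set.mem_insert_of_mem _ (Set.mem_insert_of_mem _
        (Set.mem_insert_of_mem _ rfl))
    rcases hEg with h | ⟨h, hx⟩ | ⟨h, hx⟩ | hx
    · have hg1 : g = 1 := by rw [hofAdd, h]; rfl
      subst hg1
      have hdec : a 1 = (((a 1).1, (a 1).1) : K × K) * (1,0) +
          (((a 1).2, (a 1).2) : K × K) * (0,1) := by
        refine Prod.ext_iff.mpr ⟨?_, ?_⟩ <;> simp
      have e1a : pa.e 1 * ((1:K),(0:K)) = (1,0) := by rw [e_one', one_mul]
      have e1b : pa.e 1 * ((0:K),(1:K)) = (0,1) := by rw [e_one', one_mul]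
      rw [hdec, hA.add, hsmulδ _ _ _ e1a, hsmulδ _ _ _ e1b]
      exact add_mem
        (Submodule.smul_mem _ _ (Submodule.subset_span m0a))
        (Submodule.smul_mem _ _ (Submodule.subset_span m0b))
    · have hg1 : g = Multiplicative.ofAdd 1 := by rw [hofAdd, h]
      subst hg1
      have hdec : a (Multiplicative.ofAdd 1) =
          (((a (Multiplicative.ofAdd 1)).2, (a (Multiplicative.ofAdd 1)).2) : K × K) * (0,1) := by
        refine Prod.ext_iff.mpr ⟨?_, ?_⟩ <;>
          simp only [Prod.mk_mul_mk, mul_zero, mul_one, zero_mul, one_mul] <;>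
          first | rfl | exact hx
      have eb : pa.e (Multiplicative.ofAdd 1) * ((0:K),(1:K)) = (0,1) := by
        rw [hpe]; refine Prod.ext_iff.mpr ⟨?_, ?_⟩ <;> norm_num [E]
      rw [hdec, hsmulδ _ _ _ eb]
      exact Submodule.smul_mem _ _ (Submodule.subset_span m1)
    · have hg1 : g = Multiplicative.ofAdd (-1) := by rw [hofAdd, h]
      subst hg1
      have hdec : a (Multiplicative.ofAdd (-1)) =
          (((a (Multiplicative.ofAdd (-1))).1, (a (Multiplicative.ofAdd (-1))).1) : K × K) * (1,0) := by
        refine Prod.ext_iff.mpr ⟨?_, ?_⟩ <;>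
          simp only [Prod.mk_mul_mk, mul_zero, mul_one, zero_mul, one_mul] <;>
          first | rfl | exact hx
      have eb : pa.e (Multiplicative.ofAdd (-1)) * ((1:K),(0:K)) = (1,0) := by
        rw [hpe]; refine Prod.ext_iff.mpr ⟨?_, ?_⟩ <;> norm_num [E]
      rw [hdec, hsmulδ _ _ _ eb]
      exact Submodule.smul_mem _ _ (Submodule.subset_span m2)
    · rw [hx, δ0]
      exact Submodule.zero_mem _
  haveI : Module.Finite K A := Module.finite_def.mpr
    (Submodule.fg_def.mpr ⟨{v0a, v0b, v1, v2},
      (Set.finite_singleton _).insert _ |>.insert _ |>.insert _, hspan⟩)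
  haveI : IsArtinian K A := isArtinian_of_fg_of_artinian'
  letI : Algebra K Aᵐᵒᵖ := MulOpposite.instAlgebra
  haveI : Module.Finite K Aᵐᵒᵖ := Module.Finite.equiv (MulOpposite.opLinearEquiv K)
  haveI : IsArtinian K Aᵐᵒᵖ := isArtinian_of_fg_of_artinian'
  exact isArtinian_of_tower K this


end S7

/-- There is a unital partial action `α` of `ℤ` on
`R = K e₁ ⊕ K e₂ ≅ K × K` (`K` a field) with `D₀ = R`, `D₁ = K e₂`,
`D₋₁ = K e₁`, `D_i = 0` for `|i| ≥ 2`, `α₁(e₁) = e₂`, `α₋₁(e₂) = e₁`, such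
that every realization of the partial skew group ring `R *_α ℤ` is right
artinian, while `ℤ` is infinite and `α` is not of finite type. -/
theorem exists_partialAction_int_rightArtinian_not_finiteType
    (K : Type) [Field K] :
    ∃ pa : PartialAction (Multiplicative ℤ) (K × K),
      pa.e (Multiplicative.ofAdd 0) = 1 ∧
      pa.e (Multiplicative.ofAdd 1) = (0, 1) ∧
      pa.e (Multiplicative.ofAdd (-1)) = (1, 0) ∧
      (∀ i : ℤ, i ≠ 0 → i ≠ 1 → i ≠ -1 → pa.e (Multiplicative.ofAdd i) = 0) ∧
      pa.act (Multiplicative.ofAdd 1) (1, 0) = (0, 1) ∧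
      pa.act (Multiplicative.ofAdd (-1)) (0, 1) = (1, 0) ∧
      ¬ pa.FiniteType ∧
      Infinite (Multiplicative ℤ) ∧
      (∀ (A : Type) [Ring A] (δ : Multiplicative ℤ → K × K → A),
        IsPartialSkewGroupRing pa A δ → IsRightArtinianRing A) := by
  refine ⟨S7.pa K, ?_, ?_, ?_, ?_, ?_, ?_, ?_, inferInstance, ?_⟩
  · rw [show (S7.pa K).e (Multiplicative.ofAdd 0) = S7.E K 0 from rfl]
    norm_num [S7.E]
  · rw [show (S7.pa K).e (Multiplicative.ofAdd 1) = S7.E K 1 from rfl]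
    norm_num [S7.E]
  · rw [show (S7.pa K).e (Multiplicative.ofAdd (-1)) = S7.E K (-1) from rfl]
    norm_num [S7.E]
  · intro i h0 h1 h2
    rw [show (S7.pa K).e (Multiplicative.ofAdd i) = S7.E K i from rfl]
    rw [S7.E, if_neg (by simpa using h0), if_neg (by simpa using h1),
      if_neg (by simpa using h2)]
  · rw [show (S7.pa K).act (Multiplicative.ofAdd 1) ((1:K), (0:K))
        = S7.Act 1 ((1:K), (0:K)) from rfl]
    norm_num [S7.Act]
  · rw [show (S7.pa K).act (Multiplicative.ofAdd (-1)) ((0:K), (1:K))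
        = S7.Act (-1) ((0:K), (1:K)) from rfl]
    norm_num [S7.Act]
  · rintro ⟨s, hs⟩
    set M : ℤ := ((s.sup fun i => i.toAdd.natAbs : ℕ) : ℤ) with hM
    obtain ⟨a, ha, hsum⟩ := hs (Multiplicative.ofAdd (M + 2))
    have hz : ∀ i ∈ s, a i = 0 := by
      intro i hi
      have h1 : i.toAdd.natAbs ≤ (s.sup fun i => i.toAdd.natAbs) :=
        Finset.le_sup hi
      have h2 := ha i
      rw [show (S7.pa K).e (Multiplicative.ofAdd (M + 2) * i)
          = S7.E K ((M + 2) + i.toAdd) by rw [show (S7.pa K).e _ = S7.E K _ from rfl, toAdd_mul, toAdd_ofAdd],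
        S7.E_mem] at h2
      rcases h2 with h | ⟨h, _⟩ | ⟨h, _⟩ | h <;> first | omega | exact h
    exact one_ne_zero ((Finset.sum_eq_zero hz) ▸ hsum).symm
  · intro A _ δ hA
    exact S7.artinian (S7.pa K) (fun g => rfl) (fun g x => rfl) A δ hA
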